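/- Let a ∈ (0,π) and x ∈ (−π,π). Then 3 + 2(cos(2a) + cos(2(x−a)) + cos(2x)) = 0 if and only if (a,x) is one of the four pairs (2π/3, −2π/3), (π/3, 2π/3), (π/3, −π/3), (2π/3, π/3). -/
import Mathlib

open Real

set_option maxHeartbeats 1000000 in
theorem stmt_3 (a x : ℝ) (ha : a ∈ Set.Ioo 0 π) (hx : x ∈ Set.Ioo (-π) π) :
    3 + 2 * (cos (2 * a) + cos (2 * (x - a)) + cos (2 * x)) = 0 ↔
      (a, x) = (2 * π / 3, -(2 * π / 3)) ∨
      (a, x) = (π / 3, 2 * π / 3) ∨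
      (a, x) = (π / 3, -(π / 3)) ∨
      (a, x) = (2 * π / 3, π / 3) := by
  obtain ⟨ha0, hap⟩ := ha
  obtain ⟨hx0, hxp⟩ := hx
  have pi_pos := Real.pi_pos
  have c23 : cos (2 * π / 3) = -(1/2) := by
    rw [show 2 * π / 3 = π - π/3 by ring, cos_pi_sub, cos_pi_div_three]
  have c43 : cos (4 * π / 3) = -(1/2) := by
    rw [show 4 * π / 3 = π - (-(π/3)) by ring, cos_pi_sub, cos_neg, cos_pi_div_three]
  have c83 : cos (8 * π / 3) = -(1/2) := by
    rw [show 8 * π / 3 = 2 * π + 2 * π / 3 by ring, cos_add, cos_two_pi, sin_two_pi, c23]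
    ring
  have s23 : sin (2 * π / 3) = sqrt 3 / 2 := by
    rw [show 2 * π / 3 = π - π/3 by ring, sin_pi_sub, sin_pi_div_three]
  have s43 : sin (4 * π / 3) = -(sqrt 3 / 2) := by
    rw [show 4 * π / 3 = π - (-(π/3)) by ring, sin_pi_sub, sin_neg, sin_pi_div_three]
  have s3pos : (0:ℝ) < sqrt 3 := Real.sqrt_pos.mpr (by norm_num)
  constructor
  · intro h
    have hc : cos (2*(x-a)) = cos (2*x) * cos (2*a) + sin (2*x) * sin (2*a) := by
      rw [show 2*(x-a) = 2*x - 2*a by ring, cos_sub]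
    have key : (1 + cos (2*a) + cos (2*x))^2 + (sin (2*a) + sin (2*x))^2 = 0 := by
      nlinarith [sin_sq_add_cos_sq (2*a), sin_sq_add_cos_sq (2*x)]
    have h1 : 1 + cos (2*a) + cos (2*x) = 0 := by
      nlinarith [sq_nonneg (1 + cos (2*a) + cos (2*x)), sq_nonneg (sin (2*a) + sin (2*x))]
    have h2 : sin (2*a) + sin (2*x) = 0 := by
      nlinarith [sq_nonneg (1 + cos (2*a) + cos (2*x)), sq_nonneg (sin (2*a) + sin (2*x))]
    have hsa : sin (2*a) = -sin (2*x) := by linarith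
    have hca' : cos (2*a) = -1 - cos (2*x) := by linarith
    have e : cos (2*a)^2 = cos (2*x)^2 := by
      have p1 := sin_sq_add_cos_sq (2*a)
      have p2 := sin_sq_add_cos_sq (2*x)
      nlinarith [hsa]
    have hcx2' : 1 + 2 * cos (2*x) = 0 := by
      rw [hca'] at e; linear_combination e
    have hca2 : cos (2*a) = -(1/2) := by linarith
    have hcx2 : cos (2*x) = -(1/2) := by linarith
    have hca : cos a = 1/2 ∨ cos a = -(1/2) := by
      have := cos_two_mul a
      have h4 : (cos a - 1/2) * (cos a + 1/2) = 0 := by nlinarith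
      rcases mul_eq_zero.mp h4 with h | h
      · left; linarith
      · right; linarith
    have hcx : cos x = 1/2 ∨ cos x = -(1/2) := by
      have := cos_two_mul x
      have h4 : (cos x - 1/2) * (cos x + 1/2) = 0 := by nlinarith
      rcases mul_eq_zero.mp h4 with h | h
      · left; linarith
      · right; linarith
    -- determine a
    have hmem_a : a ∈ Set.Icc 0 π := ⟨ha0.le, hap.le⟩
    have hA : a = π/3 ∨ a = 2*π/3 := by
      rcases hca with h' | h'
      · left
        exact injOn_cos hmem_a ⟨by positivity, by linarith⟩
          (by rw [h', cos_pi_div_three])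
      · right
        exact injOn_cos hmem_a ⟨by positivity, by linarith⟩
          (by rw [h', show 2*π/3 = 2*π/3 from rfl, c23])
    -- determine |x|
    have hmem_x : |x| ∈ Set.Icc 0 π := ⟨abs_nonneg x, by rw [abs_le]; constructor <;> linarith⟩
    have hX : x = π/3 ∨ x = -(π/3) ∨ x = 2*π/3 ∨ x = -(2*π/3) := by
      rcases hcx with h' | h'
      · have : |x| = π/3 := injOn_cos hmem_x ⟨by positivity, by linarith⟩
          (by rw [Real.cos_abs, h', cos_pi_div_three])
        rcases abs_eq (by positivity : (0:ℝ) ≤ π/3) |>.mp this with h'' | h''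
        · exact Or.inl h''
        · exact Or.inr (Or.inl h'')
      · have : |x| = 2*π/3 := injOn_cos hmem_x ⟨by positivity, by linarith⟩
          (by rw [Real.cos_abs, h', c23])
        rcases abs_eq (by positivity : (0:ℝ) ≤ 2*π/3) |>.mp this with h'' | h''
        · exact Or.inr (Or.inr (Or.inl h''))
        · exact Or.inr (Or.inr (Or.inr h''))
    have sa1 : sin (2*(π/3)) = sqrt 3 / 2 := by rw [show 2*(π/3) = 2*π/3 by ring]; exact s23
    have sa2 : sin (2*(2*π/3)) = -(sqrt 3 / 2) := by rw [show 2*(2*π/3) = 4*π/3 by ring]; exact s43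
    have sx1 : sin (2*(-(π/3))) = -(sqrt 3 / 2) := by
      rw [show 2*(-(π/3)) = -(2*π/3) by ring, sin_neg, s23]
    have sx2 : sin (2*(-(2*π/3))) = sqrt 3 / 2 := by
      rw [show 2*(-(2*π/3)) = -(4*π/3) by ring, sin_neg, s43]; ring
    rcases hA with rfl | rfl <;> rcases hX with rfl | rfl | rfl | rfl <;>
      simp only [sa1, sa2, sx1, sx2] at h2 <;>
      first
        | (exfalso; nlinarith [s3pos])
        | exact Or.inl rfl
        | exact Or.inr (Or.inl rfl)
        | exact Or.inr (Or.inr (Or.inl rfl))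
        | exact Or.inr (Or.inr (Or.inr rfl))
  · rintro (h | h | h | h) <;> simp only [Prod.mk.injEq] at h <;>
      obtain ⟨rfl, rfl⟩ := h
    · rw [show (2:ℝ)*(2*π/3) = 4*π/3 by ring,
        show (2:ℝ)*(-(2*π/3) - 2*π/3) = -(8*π/3) by ring,
        show (2:ℝ)*(-(2*π/3)) = -(4*π/3) by ring, cos_neg, cos_neg, c43, c83]
      ring
    · rw [show (2:ℝ)*(π/3) = 2*π/3 by ring,
        show (2:ℝ)*(2*π/3 - π/3) = 2*π/3 by ring,
        show (2:ℝ)*(2*π/3) = 4*π/3 by ring, c23, c43]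
      ring
    · rw [show (2:ℝ)*(π/3) = 2*π/3 by ring,
        show (2:ℝ)*(-(π/3) - π/3) = -(4*π/3) by ring,
        show (2:ℝ)*(-(π/3)) = -(2*π/3) by ring, cos_neg, cos_neg, c23, c43]
      ring
    · rw [show (2:ℝ)*(2*π/3) = 4*π/3 by ring,
        show (2:ℝ)*(π/3 - 2*π/3) = -(2*π/3) by ring,
        show (2:ℝ)*(π/3) = 2*π/3 by ring, cos_neg, c23, c43]
      ring
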